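/- Let W be a Z/2-graded differential algebra over a field k of characteristic zero with H(W, d) ≅ k, let p ∈ W be an even central cocycle which is a coboundary, generating a polynomial subalgebra k[p] ⊂ W, and suppose W is a free k[p]-module. Then H(W/⟨p⟩, d) is two-dimensional over k, with basis {[1], [C_p]} where C_p ∈ W satisfies dC_p = p, and [C_p]² = B(p,p)·[1] where B(p,p) = [C_p · C_p] ∈ H(W) ≅ k. Hence H(W/⟨p⟩) ≅ Cl(k·p, B) as algebras. -/

import Mathlib

/-- Cocycles modulo coboundaries of a differential `d`. -/
noncomputable abbrev cohomology {k M : Type*} [Field k] [AddCommGroup M] [Module k M]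
    (d : M →ₗ[k] M) :=
  LinearMap.ker d ⧸ (LinearMap.range d).comap (LinearMap.ker d).subtype

set_option maxHeartbeats 3200000 in
set_option synthInstance.maxHeartbeats 200000 in
/-- let `W` be a `Z/2`-graded differential algebra over `k`
(char 0) with `H(W) ≅ k`, `p` an even central coboundary generating a
polynomial subalgebra `k[p]` over which `W` is free, and `F = W/⟨p⟩` the
quotient with induced differential `dF`.  Then `H(F)` is two-dimensional with
basis `{[1], [C_p]}` (`d C_p = p`), `[C_p]² = B(p,p)·[1]` where
`B(p,p) = [C_p·C_p] ∈ H(W) ≅ k`, and hence `H(F) ≅ Cl(k·p, B)` as algebras. -/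
theorem stmt8 {k W F : Type*} [Field k] [CharZero k]
    [Ring W] [Algebra k W] [Ring F] [Algebra k F]
    (𝒜 : ZMod 2 → Submodule k W) [GradedAlgebra 𝒜]
    (d : W →ₗ[k] W)
    (hd2 : ∀ w, d (d w) = 0)
    (hodd : ∀ (i : ZMod 2), ∀ x ∈ 𝒜 i, d x ∈ 𝒜 (i + 1))
    (hleib : ∀ (i : ZMod 2) (x : W), x ∈ 𝒜 i → ∀ y : W,
      d (x * y) = d x * y + ((-1 : k) ^ i.val) • (x * d y))
    (htriv : ∀ w : W, d w = 0 → ∃ (c : k) (v : W), w = algebraMap k W c + d v)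
    (hinj : ∀ c : k, (∃ v : W, algebraMap k W c = d v) → c = 0)
    (p Cp : W)
    (hp_even : p ∈ 𝒜 0)
    (hp_central : ∀ w : W, p * w = w * p)
    (hCp_odd : Cp ∈ 𝒜 1)
    (hdCp : d Cp = p)
    -- `k[p]` is a polynomial ring: the powers of `p` are linearly independent
    (hpoly : LinearIndependent k (fun m : ℕ => p ^ m))
    -- `W` is a free `k[p]`-module
    (hfree : ∃ (ι : Type*) (e : ι → W),
      Function.Bijective (fun f : ι →₀ (Algebra.adjoin k ({p} : Set W)) =>
        f.sum fun j s => (s : W) * e j))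
    -- the quotient `F = W/⟨p⟩`
    (π : W →ₐ[k] F) (hπ : Function.Surjective π)
    (hker : ∀ w : W, π w = 0 ↔ w ∈ Ideal.span ({p} : Set W))
    (dF : F →ₗ[k] F) (hdF : ∀ w : W, dF (π w) = π (d w)) :
    ∃ B : k,
      -- `B = B(p,p)` is the class of `C_p · C_p` in `H(W) ≅ k`
      (∃ v : W, Cp * Cp = algebraMap k W B + d v) ∧
      ∀ (h1 : (1 : F) ∈ LinearMap.ker dF)
        (hC : π Cp ∈ LinearMap.ker dF)
        (hCC : π Cp * π Cp ∈ LinearMap.ker dF),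
      -- `{[1], [C_p]}` is a basis: linearly independent and `dim H(F) = 2`
      LinearIndependent k
        ![(Submodule.Quotient.mk ⟨1, h1⟩ : cohomology dF),
          (Submodule.Quotient.mk ⟨π Cp, hC⟩ : cohomology dF)] ∧
      Module.finrank k (cohomology dF) = 2 ∧
      -- `[C_p]² = B(p,p) · [1]`
      (Submodule.Quotient.mk ⟨π Cp * π Cp, hCC⟩ : cohomology dF)
        = B • (Submodule.Quotient.mk ⟨1, h1⟩ : cohomology dF) ∧
      -- hence `H(F) ≅ Cl(k·p, B)` as algebras
      ∃ φ : CliffordAlgebra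
          ((Matrix.of fun (_ _ : Fin 1) => B).toQuadraticMap') ≃ₗ[k] cohomology dF,
        φ 1 = Submodule.Quotient.mk ⟨1, h1⟩ ∧
        φ (CliffordAlgebra.ι _ (Pi.single 0 1)) = Submodule.Quotient.mk ⟨π Cp, hC⟩ ∧
        (∀ (x y : CliffordAlgebra ((Matrix.of fun (_ _ : Fin 1) => B).toQuadraticMap'))
            (a b : F)
            (ha : a ∈ LinearMap.ker dF) (hb : b ∈ LinearMap.ker dF)
            (hab : a * b ∈ LinearMap.ker dF),
          φ x = Submodule.Quotient.mk ⟨a, ha⟩ →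
          φ y = Submodule.Quotient.mk ⟨b, hb⟩ →
          φ (x * y) = Submodule.Quotient.mk ⟨a * b, hab⟩) := by
  classical
  -- basic differential facts in `W`
  have hdp : d p = 0 := by rw [← hdCp]; exact hd2 Cp
  have h1mem : (1 : W) ∈ 𝒜 0 := SetLike.one_mem_graded 𝒜
  have leib0 : ∀ x y : W, x ∈ 𝒜 0 → d (x * y) = d x * y + x * d y := by
    intro x y hx
    rw [hleib 0 x hx y]
    norm_num
  have leib1 : ∀ x y : W, x ∈ 𝒜 1 → d (x * y) = d x * y - x * d y := by
    intro x y hx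
    have hv : ((1 : ZMod 2)).val = 1 := rfl
    rw [hleib 1 x hx y, hv, pow_one, neg_smul, one_smul, sub_eq_add_neg]
  have hd1 : d (1 : W) = 0 := by
    have := leib0 1 1 h1mem
    rw [one_mul, one_mul, mul_one] at this
    have h2 : d (1:W) = d 1 + d 1 := this
    have := add_left_cancel (a := d (1:W)) (b := 0) (c := d (1:W)) (by rw [add_zero, ← h2])
    exact this.symm
  -- decomposition
  have hsplit : ∀ w : W, ∃ w0 w1, w0 ∈ 𝒜 0 ∧ w1 ∈ 𝒜 1 ∧ w = w0 + w1 := by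
    intro w
    refine ⟨DirectSum.decompose 𝒜 w 0, DirectSum.decompose 𝒜 w 1,
      (DirectSum.decompose 𝒜 w 0).2, (DirectSum.decompose 𝒜 w 1).2, ?_⟩
    have h1 := DirectSum.sum_support_decompose 𝒜 w
    have h2 : ∑ i ∈ DFinsupp.support (DirectSum.decompose 𝒜 w),
        (DirectSum.decompose 𝒜 w i : W) = ∑ i : ZMod 2, (DirectSum.decompose 𝒜 w i : W) :=
      Finset.sum_subset (Finset.subset_univ _) (by
        intro i _ hi
        rw [DFinsupp.notMem_support_iff] at hi
        rw [hi]; rfl)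
    have h3 : (Finset.univ : Finset (ZMod 2)) = {0, 1} := by decide
    have h4 : ∑ i : ZMod 2, (DirectSum.decompose 𝒜 w i : W) = w := h2.symm.trans h1
    rw [h3, Finset.sum_insert (by decide), Finset.sum_singleton] at h4
    exact h4.symm
  have huniq : ∀ a b : W, a ∈ 𝒜 0 → b ∈ 𝒜 1 → a + b = 0 → a = 0 ∧ b = 0 := by
    intro a b ha hb h
    have k0 : ∀ j : ZMod 2, (DirectSum.decompose 𝒜 (a + b) j : W) = 0 := by
      intro j; rw [h]; simp
    have e0 := k0 0
    have e1 := k0 1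
    rw [DirectSum.decompose_add, DirectSum.add_apply] at e0 e1
    push_cast at e0 e1
    rw [DirectSum.decompose_of_mem_same 𝒜 ha,
        DirectSum.decompose_of_mem_ne 𝒜 hb (by decide : (1 : ZMod 2) ≠ 0)] at e0
    rw [DirectSum.decompose_of_mem_same 𝒜 hb,
        DirectSum.decompose_of_mem_ne 𝒜 ha (by decide : (0 : ZMod 2) ≠ 1)] at e1
    exact ⟨by simpa using e0, by simpa using e1⟩
  -- closedness passes to components
  have hdcomp : ∀ x x0 x1 : W, d x = 0 → x0 ∈ 𝒜 0 → x1 ∈ 𝒜 1 → x = x0 + x1 →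
      d x0 = 0 ∧ d x1 = 0 := by
    intro x x0 x1 hx h0 h1 hxe
    have hsum : d x1 + d x0 = 0 := by
      have : d x0 + d x1 = 0 := by rw [← map_add, ← hxe]; exact hx
      rw [add_comm] at this; exact this
    have := huniq (d x1) (d x0) (by have h := hodd 1 x1 h1; rwa [show (1 : ZMod 2) + 1 = 0 by decide] at h) (hodd 0 x0 h0) hsum
    exact ⟨this.2, this.1⟩
  -- derived Leibniz rules
  have leibA : ∀ x y : W, d y = 0 → d (x * y) = d x * y := by
    intro x y hy
    obtain ⟨x0, x1, h0, h1, rfl⟩ := hsplit x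
    rw [add_mul, map_add, leib0 _ _ h0, leib1 _ _ h1, hy, map_add, add_mul]
    simp
  have leibB : ∀ x y : W, d x = 0 → ∃ u, x * d y = d u := by
    intro x y hx
    obtain ⟨x0, x1, h0, h1, hxe⟩ := hsplit x
    obtain ⟨e0, e1⟩ := hdcomp x x0 x1 hx h0 h1 hxe
    refine ⟨x0 * y - x1 * y, ?_⟩
    rw [map_sub, leib0 _ _ h0, leib1 _ _ h1, e0, e1, hxe]
    simp [add_mul]
  have leibCpR : ∀ x : W, ∃ m, d x * Cp = d (x * Cp) + m * p := by
    intro x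
    obtain ⟨x0, x1, h0, h1, hxe⟩ := hsplit x
    refine ⟨x1 - x0, ?_⟩
    rw [hxe, add_mul, map_add, map_add, leib0 _ _ h0, leib1 _ _ h1, hdCp, sub_mul]
    simp only [add_mul]
    abel
  have leibCpL : ∀ y : W, Cp * d y = p * y - d (Cp * y) := by
    intro y
    rw [leib1 Cp y hCp_odd, hdCp]
    abel
  -- regularity of `p`
  have hreg : ∀ x : W, p * x = 0 → x = 0 := by
    have hq : ∀ q : Polynomial k, Polynomial.aeval p q = 0 → q = 0 := by
      intro q hq0
      by_contra hne
      rw [Polynomial.aeval_eq_sum_range] at hq0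
      have := linearIndependent_iff'.mp hpoly (Finset.range (q.natDegree + 1))
        (fun i => q.coeff i) hq0 q.natDegree (Finset.self_mem_range_succ _)
      exact hne (Polynomial.leadingCoeff_eq_zero.mp this)
    have regA : ∀ s : Algebra.adjoin k ({p} : Set W), p * (s : W) = 0 → s = 0 := by
      rintro ⟨s, hs⟩ hps
      have hps' : p * s = 0 := hps
      rw [Algebra.adjoin_singleton_eq_range_aeval] at hs
      obtain ⟨q, hqs⟩ := hs
      have hqs' : Polynomial.aeval p q = s := hqs
      have hX : Polynomial.aeval p (Polynomial.X * q) = 0 := by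
        rw [map_mul, Polynomial.aeval_X, hqs']; exact hps'
      have h0 := hq _ hX
      have hq0 : q = 0 := by
        rcases mul_eq_zero.mp h0 with h | h
        · exact absurd h Polynomial.X_ne_zero
        · exact h
      apply Subtype.ext
      show s = 0
      rw [← hqs', hq0, map_zero]
    obtain ⟨ι, e, hbij⟩ := hfree
    set A := Algebra.adjoin k ({p} : Set W) with hA
    have hpA : p ∈ A := Algebra.self_mem_adjoin_singleton k p
    set pA : A := ⟨p, hpA⟩ with hpAdef
    set G := fun f : ι →₀ A => f.sum fun j s => (s : W) * e j with hG
    intro x hx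
    obtain ⟨f, hf⟩ := hbij.2 x
    have key : G (pA • f) = p * G f := by
      rw [hG]
      simp only [Finsupp.mul_sum]
      rw [Finsupp.sum_smul_index' (by intro i; simp)]
      congr 1
      ext j s
      show ((pA * s : A) : W) * e j = p * ((s : W) * e j)
      push_cast
      rw [mul_assoc]
    have h0 : pA • f = 0 := by
      apply hbij.1
      show G _ = G 0
      rw [key, hf, hx]
      simp [hG]
    have hf0 : f = 0 := by
      ext j
      have hj := DFunLike.congr_fun h0 j
      rw [Finsupp.smul_apply, smul_eq_mul] at hj
      have hz : p * ((f j : W)) = 0 := by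
        have hz0 : ((pA * f j : A) : W) = 0 := by rw [hj]; rfl
        rwa [MulMemClass.coe_mul] at hz0
      have := regA _ hz
      rw [this]; rfl
    rw [← hf, hf0]
    simp [hG]
  -- kernel of π
  have hDiv : ∀ w : W, π w = 0 → ∃ m, w = p * m := by
    intro w h
    rw [hker] at h
    obtain ⟨a, ha⟩ := Submodule.mem_span_singleton.mp h
    refine ⟨a, ?_⟩
    rw [← ha, smul_eq_mul]
    exact (hp_central a).symm
  have hπp : ∀ v : W, π (p * v) = 0 := by
    intro v
    rw [hker]
    exact Submodule.mem_span_singleton.mpr ⟨v, by rw [smul_eq_mul, ← hp_central]⟩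
  have hπp' : ∀ v : W, π (v * p) = 0 := by
    intro v
    rw [hker]
    exact Submodule.mem_span_singleton.mpr ⟨v, by rw [smul_eq_mul]⟩
  -- structure of almost-closed elements of `W`
  have structW : ∀ w : W, (∃ u, d w = p * u) →
      ∃ (c c' : k) (v v' : W), w = algebraMap k W c' + c • Cp + p * v + d v' := by
    rintro w ⟨u, hu⟩
    have hdu : d u = 0 := by
      apply hreg
      have h0 : d (d w) = 0 := hd2 w
      rw [hu, leib0 p u hp_even, hdp, zero_mul, zero_add] at h0
      exact h0
    obtain ⟨c, v, hv⟩ := htriv u hdu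
    have hclosed : d (w - c • Cp - p * v) = 0 := by
      rw [map_sub, map_sub, map_smul, hdCp, leib0 p v hp_even, hdp, zero_mul, zero_add,
        hu, hv, mul_add]
      have : p * algebraMap k W c = c • p := by
        rw [← Algebra.commutes c p, ← Algebra.smul_def]
      rw [this]
      abel
    obtain ⟨c', v', hv'⟩ := htriv _ hclosed
    refine ⟨c, c', v, v', ?_⟩
    have : w = c • Cp + p * v + (algebraMap k W c' + d v') := by rw [← hv']; abel
    rw [this]; abel
  -- F-level facts
  have hdF2 : ∀ f : F, dF (dF f) = 0 := by
    intro f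
    obtain ⟨w, rfl⟩ := hπ f
    rw [hdF, hdF, hd2, map_zero]
  have structF : ∀ f : F, dF f = 0 → ∃ (c c' : k) (x : F), f = algebraMap k F c' + c • π Cp + dF x := by
    intro f hf
    obtain ⟨w, rfl⟩ := hπ f
    have h0 : π (d w) = 0 := by rw [← hdF]; exact hf
    obtain ⟨m, hm⟩ := hDiv _ h0
    obtain ⟨c, c', v, v', hw⟩ := structW w ⟨m, hm⟩
    refine ⟨c, c', π v', ?_⟩
    rw [hw, map_add, map_add, map_add, hπp, map_smul, ← hdF, AlgHom.commutes]
    abel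
  -- absorption of coboundaries in products
  have r1 : ∀ x0 z : W, d z = 0 →
      dF (π x0) * π z ∈ LinearMap.range dF ∧ π z * dF (π x0) ∈ LinearMap.range dF := by
    intro x0 z hz
    constructor
    · refine ⟨π (x0 * z), ?_⟩
      rw [hdF, leibA x0 z hz, map_mul, ← hdF]
    · obtain ⟨u, hu⟩ := leibB z x0 hz
      refine ⟨π u, ?_⟩
      rw [hdF, ← hu, map_mul, ← hdF]
  have r2 : ∀ x0 : W,
      dF (π x0) * π Cp ∈ LinearMap.range dF ∧ π Cp * dF (π x0) ∈ LinearMap.range dF := by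
    intro x0
    constructor
    · obtain ⟨m, hm⟩ := leibCpR x0
      refine ⟨π (x0 * Cp), ?_⟩
      have hm' : d (x0 * Cp) = d x0 * Cp - m * p := by rw [hm]; abel
      rw [hdF, hm', map_sub, hπp' m, sub_zero, map_mul, ← hdF]
    · refine ⟨π (-(Cp * x0)), ?_⟩
      have h2 : π (Cp * d x0) = - π (d (Cp * x0)) := by
        rw [leibCpL x0, map_sub, hπp, zero_sub]
      rw [hdF, map_neg, map_neg, ← h2, map_mul, ← hdF]
  have r3 : ∀ x0 y0 : W, dF (π x0) * dF (π y0) ∈ LinearMap.range dF := by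
    intro x0 y0
    refine ⟨π (x0 * d y0), ?_⟩
    rw [hdF, leibA x0 (d y0) (hd2 y0), map_mul, ← hdF, ← hdF]
  have rangeF : ∀ a x : F, dF a = 0 →
      dF x * a ∈ LinearMap.range dF ∧ a * dF x ∈ LinearMap.range dF := by
    intro a x ha
    obtain ⟨c, c', y, hae⟩ := structF a ha
    obtain ⟨x0, rfl⟩ := hπ x
    obtain ⟨y0, rfl⟩ := hπ y
    have hxr : dF (π x0) ∈ LinearMap.range dF := ⟨π x0, rfl⟩
    constructor
    · rw [hae, mul_add, mul_add]
      refine add_mem (add_mem ?_ ?_) ?_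
      · have : dF (π x0) * algebraMap k F c' = c' • dF (π x0) := by
          rw [← Algebra.commutes c' (dF (π x0)), ← Algebra.smul_def]
        rw [this]
        exact Submodule.smul_mem _ c' hxr
      · rw [mul_smul_comm]
        exact Submodule.smul_mem _ c (r2 x0).1
      · exact r3 x0 y0
    · rw [hae, add_mul, add_mul]
      refine add_mem (add_mem ?_ ?_) ?_
      · have : algebraMap k F c' * dF (π x0) = c' • dF (π x0) := by
          rw [← Algebra.smul_def]
        rw [this]
        exact Submodule.smul_mem _ c' hxr
      · rw [smul_mul_assoc]
        exact Submodule.smul_mem _ c (r2 x0).2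
      · exact r3 y0 x0
  -- the class B of Cp·Cp
  have hCC0 : d (Cp * Cp) = 0 := by
    rw [leib1 Cp Cp hCp_odd, hdCp, hp_central Cp, sub_self]
  obtain ⟨B, v, hB⟩ := htriv _ hCC0
  refine ⟨B, ⟨v, hB⟩, ?_⟩
  intro h1 hC hCC
  have hmkeq : ∀ x y : LinearMap.ker dF, ((x : F) - (y : F) ∈ LinearMap.range dF) →
      (Submodule.Quotient.mk x : cohomology dF) = Submodule.Quotient.mk y := by
    intro x y h
    rw [Submodule.Quotient.eq]
    simpa using h
  have hmk1C : ∀ s t : k,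
      s • (Submodule.Quotient.mk ⟨1, h1⟩ : cohomology dF)
        + t • (Submodule.Quotient.mk ⟨π Cp, hC⟩ : cohomology dF)
      = Submodule.Quotient.mk (s • (⟨1, h1⟩ : LinearMap.ker dF) + t • ⟨π Cp, hC⟩) := by
    intro s t
    rw [← Submodule.Quotient.mk_smul, ← Submodule.Quotient.mk_smul, ← Submodule.Quotient.mk_add]
  -- linear independence of the classes
  have key_indep : ∀ s t : k, (s • (1 : F) + t • π Cp ∈ LinearMap.range dF) → s = 0 ∧ t = 0 := by
    rintro s t ⟨x, hx⟩
    obtain ⟨v0, rfl⟩ := hπ x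
    have h0 : π (s • (1 : W) + t • Cp - d v0) = 0 := by
      rw [map_sub, map_add, map_smul, map_smul, map_one, ← hdF, hx]
      abel
    obtain ⟨m, hm⟩ := hDiv _ h0
    have hdm : t • (1 : W) = d m := by
      have h2 := congrArg d hm
      rw [map_sub, map_add, map_smul, map_smul, hd1, hdCp, smul_zero, zero_add, hd2, sub_zero,
        leib0 p m hp_even, hdp, zero_mul, zero_add] at h2
      have h3 : p * (t • (1 : W) - d m) = 0 := by
        rw [mul_sub, ← h2, mul_smul_comm, mul_one]
        exact sub_self _
      exact sub_eq_zero.mp (hreg _ h3)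
    have ht : t = 0 := hinj t ⟨m, by rw [Algebra.algebraMap_eq_smul_one]; exact hdm⟩
    have hdm0 : d m = 0 := by rw [← hdm, ht, zero_smul]
    obtain ⟨c, n, hn⟩ := htriv m hdm0
    have hs : s = 0 := by
      apply hinj s
      refine ⟨v0 + c • Cp + p * n, ?_⟩
      have h4 : s • (1 : W) = d v0 + p * m := by
        have : s • (1 : W) + t • Cp - d v0 = p * m := hm
        rw [ht, zero_smul, add_zero] at this
        rw [← this]
        abel
      rw [Algebra.algebraMap_eq_smul_one, h4, hn, mul_add, map_add, map_add, map_smul, hdCp,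
        leib0 p n hp_even, hdp, zero_mul, zero_add]
      have h5 : p * algebraMap k W c = c • p := by
        rw [← Algebra.commutes c p, ← Algebra.smul_def]
      rw [h5]; abel
    exact ⟨hs, ht⟩
  have hindep : LinearIndependent k
      ![(Submodule.Quotient.mk ⟨1, h1⟩ : cohomology dF),
        (Submodule.Quotient.mk ⟨π Cp, hC⟩ : cohomology dF)] := by
    rw [LinearIndependent.pair_iff]
    intro s t hst
    apply key_indep s t
    rw [hmk1C, Submodule.Quotient.mk_eq_zero] at hst
    simpa using hst
  -- spanning
  have hspan : ∀ z : cohomology dF, ∃ s t : k,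
      z = s • (Submodule.Quotient.mk ⟨1, h1⟩ : cohomology dF)
        + t • (Submodule.Quotient.mk ⟨π Cp, hC⟩ : cohomology dF) := by
    intro z
    obtain ⟨⟨f, hf⟩, rfl⟩ := Submodule.Quotient.mk_surjective _ z
    obtain ⟨c, c', x, hfe⟩ := structF f hf
    refine ⟨c', c, ?_⟩
    rw [hmk1C]
    apply hmkeq
    refine ⟨x, ?_⟩
    have : (((⟨f, hf⟩ : LinearMap.ker dF) : F))
        - ((c' • (⟨1, h1⟩ : LinearMap.ker dF) + c • ⟨π Cp, hC⟩ : LinearMap.ker dF) : F)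
        = f - (c' • (1 : F) + c • π Cp) := rfl
    rw [this, hfe, Algebra.algebraMap_eq_smul_one]
    abel
  -- basis of the cohomology
  have hspan_top : ⊤ ≤ Submodule.span k (Set.range
      ![(Submodule.Quotient.mk ⟨1, h1⟩ : cohomology dF),
        (Submodule.Quotient.mk ⟨π Cp, hC⟩ : cohomology dF)]) := by
    intro z _
    obtain ⟨s, t, rfl⟩ := hspan z
    exact add_mem (Submodule.smul_mem _ s (Submodule.subset_span ⟨0, rfl⟩))
      (Submodule.smul_mem _ t (Submodule.subset_span ⟨1, rfl⟩))
  set bH : Module.Basis (Fin 2) k (cohomology dF) := Module.Basis.mk hindep hspan_top with hbHdef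
  have hrank : Module.finrank k (cohomology dF) = 2 := by
    rw [Module.finrank_eq_card_basis bH, Fintype.card_fin]
  have hbH0 : bH 0 = Submodule.Quotient.mk ⟨1, h1⟩ := by
    rw [hbHdef, Module.Basis.mk_apply]
    rfl
  have hbH1 : bH 1 = Submodule.Quotient.mk ⟨π Cp, hC⟩ := by
    rw [hbHdef, Module.Basis.mk_apply]
    rfl
  -- the square identity
  have hπCpsq : π Cp * π Cp = B • (1 : F) + dF (π v) := by
    have h2 := congrArg π hB
    rw [map_mul, map_add, AlgHom.commutes, ← hdF, Algebra.algebraMap_eq_smul_one] at h2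
    exact h2
  have hsq : (Submodule.Quotient.mk ⟨π Cp * π Cp, hCC⟩ : cohomology dF)
      = B • Submodule.Quotient.mk ⟨1, h1⟩ := by
    rw [← Submodule.Quotient.mk_smul]
    apply hmkeq
    refine ⟨π v, ?_⟩
    have h3 : (((⟨π Cp * π Cp, hCC⟩ : LinearMap.ker dF) : F))
        - ((B • (⟨1, h1⟩ : LinearMap.ker dF) : LinearMap.ker dF) : F)
        = π Cp * π Cp - B • (1 : F) := rfl
    rw [h3, hπCpsq]
    abel
  refine ⟨hindep, hrank, hsq, ?_⟩
  -- the Clifford algebra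
  set Q := (Matrix.of fun (_ _ : Fin 1) => B).toQuadraticMap' with hQdef
  have hQm : ∀ m : Fin 1 → k, Q m = B * (m 0 * m 0) := by
    intro m
    simp [hQdef, Matrix.toQuadraticMap', Matrix.toQuadraticForm', LinearMap.BilinMap.toQuadraticMap_apply,
      Matrix.toLinearMap₂'_apply]
    ring
  set ee : Fin 1 → k := Pi.single 0 1 with heedef
  have hQe : Q ee = B := by rw [hQm]; simp [heedef]
  set M0 : Matrix (Fin 2) (Fin 2) k := !![0, 1; B, 0] with hM0def
  have hM0sq : M0 * M0 = algebraMap k _ B := by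
    ext i j
    fin_cases i <;> fin_cases j <;>
      simp [hM0def, Matrix.mul_apply, Fin.sum_univ_two, Matrix.algebraMap_matrix_apply]
  obtain ⟨fM, hfM⟩ : ∃ fM : (Fin 1 → k) →ₗ[k] Matrix (Fin 2) (Fin 2) k, ∀ m, fM m = m 0 • M0 :=
    ⟨{ toFun := fun m => m 0 • M0,
       map_add' := by intro a b; simp [add_smul]
       map_smul' := by intro c a; simp [smul_smul] }, fun m => rfl⟩
  have hcond : ∀ m, fM m * fM m = algebraMap k _ (Q m) := by
    intro m
    rw [hfM, smul_mul_smul_comm, hM0sq, hQm, Algebra.smul_def, ← map_mul, mul_comm]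
  set liftM := CliffordAlgebra.lift Q ⟨fM, hcond⟩ with hliftM
  have hlift_ι : liftM (CliffordAlgebra.ι Q ee) = M0 := by
    rw [hliftM, CliffordAlgebra.lift_ι_apply, hfM]
    simp [heedef]
  have hClindep : ∀ s t : k,
      s • (1 : CliffordAlgebra Q) + t • CliffordAlgebra.ι Q ee = 0 → s = 0 ∧ t = 0 := by
    intro s t h
    have h2 := congrArg liftM h
    rw [map_add, map_smul, map_smul, map_one, hlift_ι, map_zero] at h2
    constructor
    · have := congrFun (congrFun (congrArg (fun X : Matrix (Fin 2) (Fin 2) k => X) h2) 0) 0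
      simpa [hM0def, Matrix.one_apply] using this
    · have := congrFun (congrFun (congrArg (fun X : Matrix (Fin 2) (Fin 2) k => X) h2) 0) 1
      simpa [hM0def, Matrix.one_apply] using this
  have hιsq : CliffordAlgebra.ι Q ee * CliffordAlgebra.ι Q ee = algebraMap k _ B := by
    rw [CliffordAlgebra.ι_sq_scalar, hQe]
  have hClmul : ∀ s t s' t' : k,
      (s • (1 : CliffordAlgebra Q) + t • CliffordAlgebra.ι Q ee)
        * (s' • (1 : CliffordAlgebra Q) + t' • CliffordAlgebra.ι Q ee)
      = (s * s' + t * t' * B) • (1 : CliffordAlgebra Q)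
        + (s * t' + t * s') • CliffordAlgebra.ι Q ee := by
    intro s t s' t'
    rw [mul_add, add_mul, add_mul, smul_mul_smul_comm, smul_mul_smul_comm, smul_mul_smul_comm,
      smul_mul_smul_comm, hιsq, one_mul, one_mul, mul_one, Algebra.algebraMap_eq_smul_one,
      smul_smul, add_smul, add_smul]
    abel
  have hClspan : ∀ x : CliffordAlgebra Q, ∃ s t : k,
      x = s • (1 : CliffordAlgebra Q) + t • CliffordAlgebra.ι Q ee := by
    intro x
    induction x using CliffordAlgebra.induction with
    | algebraMap r => exact ⟨r, 0, by rw [Algebra.algebraMap_eq_smul_one]; simp⟩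
    | ι m =>
      refine ⟨0, m 0, ?_⟩
      have hm : m = m 0 • ee := by
        ext i
        fin_cases i
        simp [heedef]
      rw [zero_smul, zero_add, ← map_smul, ← hm]
    | mul x y hx hy =>
      obtain ⟨s, t, rfl⟩ := hx
      obtain ⟨s', t', rfl⟩ := hy
      exact ⟨s * s' + t * t' * B, s * t' + t * s', hClmul s t s' t'⟩
    | add x y hx hy =>
      obtain ⟨s, t, rfl⟩ := hx
      obtain ⟨s', t', rfl⟩ := hy
      exact ⟨s + s', t + t', by rw [add_smul, add_smul]; abel⟩
  have hClpair : LinearIndependent k ![(1 : CliffordAlgebra Q), CliffordAlgebra.ι Q ee] := by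
    rw [LinearIndependent.pair_iff]
    exact fun s t hst => hClindep s t hst
  have hCl_top : ⊤ ≤ Submodule.span k
      (Set.range ![(1 : CliffordAlgebra Q), CliffordAlgebra.ι Q ee]) := by
    intro z _
    obtain ⟨s, t, rfl⟩ := hClspan z
    exact add_mem (Submodule.smul_mem _ s (Submodule.subset_span ⟨0, rfl⟩))
      (Submodule.smul_mem _ t (Submodule.subset_span ⟨1, rfl⟩))
  set bCl : Module.Basis (Fin 2) k (CliffordAlgebra Q) := Module.Basis.mk hClpair hCl_top with hbCldef
  have hbCl0 : bCl 0 = 1 := by rw [hbCldef, Module.Basis.mk_apply]; rfl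
  have hbCl1 : bCl 1 = CliffordAlgebra.ι Q ee := by rw [hbCldef, Module.Basis.mk_apply]; rfl
  set φ : CliffordAlgebra Q ≃ₗ[k] cohomology dF := bCl.equiv bH (Equiv.refl _) with hφdef
  have hφ0 : φ (1 : CliffordAlgebra Q) = Submodule.Quotient.mk ⟨1, h1⟩ := by
    rw [hφdef, ← hbCl0, Module.Basis.equiv_apply, Equiv.refl_apply, hbH0]
  have hφι : φ (CliffordAlgebra.ι Q ee) = Submodule.Quotient.mk ⟨π Cp, hC⟩ := by
    rw [hφdef, ← hbCl1, Module.Basis.equiv_apply, Equiv.refl_apply, hbH1]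
  have hφlin : ∀ s t : k, φ (s • (1 : CliffordAlgebra Q) + t • CliffordAlgebra.ι Q ee)
      = s • (Submodule.Quotient.mk ⟨1, h1⟩ : cohomology dF)
        + t • Submodule.Quotient.mk ⟨π Cp, hC⟩ := by
    intro s t
    rw [map_add, map_smul, map_smul, hφ0, hφι]
  refine ⟨φ, hφ0, hφι, ?_⟩
  intro x y a b ha hb hab hxa hyb
  obtain ⟨s, t, rfl⟩ := hClspan x
  obtain ⟨s', t', rfl⟩ := hClspan y
  rw [hφlin, hmk1C, Submodule.Quotient.eq] at hxa hyb
  have hxa' : s • (1 : F) + t • π Cp - a ∈ LinearMap.range dF := by simpa using hxa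
  have hyb' : s' • (1 : F) + t' • π Cp - b ∈ LinearMap.range dF := by simpa using hyb
  obtain ⟨u, hu⟩ := hxa'
  obtain ⟨u0, rfl⟩ := hπ u
  obtain ⟨u', hu'⟩ := hyb'
  obtain ⟨u0', rfl⟩ := hπ u'
  set A := s • (1 : F) + t • π Cp with hA
  set A' := s' • (1 : F) + t' • π Cp with hA'
  have haA : a = A - dF (π u0) := by rw [hu]; abel
  have hbA : b = A' - dF (π u0') := by rw [hu']; abel
  have hdFA : dF A = 0 := by
    have h2 : A = a + dF (π u0) := by rw [haA]; abel
    rw [h2, map_add, LinearMap.mem_ker.mp ha, hdF2, add_zero]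
  have hdFA' : dF A' = 0 := by
    have h2 : A' = b + dF (π u0') := by rw [hbA]; abel
    rw [h2, map_add, LinearMap.mem_ker.mp hb, hdF2, add_zero]
  have hexp : a * b = A * A' - A * dF (π u0') - dF (π u0) * A' + dF (π u0) * dF (π u0') := by
    rw [haA, hbA]
    rw [sub_mul, mul_sub, mul_sub]
    abel
  have hAA : A * A' = (s * s' + t * t' * B) • (1 : F) + (s * t' + t * s') • π Cp
      + (t * t') • dF (π v) := by
    have e1 : (s • (1 : F)) * (s' • (1 : F)) = (s * s') • (1 : F) := by
      rw [smul_mul_smul_comm, one_mul]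
    have e2 : (s • (1 : F)) * (t' • π Cp) = (s * t') • π Cp := by
      rw [smul_mul_smul_comm, one_mul]
    have e3 : (t • π Cp) * (s' • (1 : F)) = (t * s') • π Cp := by
      rw [smul_mul_smul_comm, mul_one]
    have e4 : (t • π Cp) * (t' • π Cp) = (t * t') • (π Cp * π Cp) := by
      rw [smul_mul_smul_comm]
    rw [hA, hA', mul_add, add_mul, add_mul, e1, e2, e3, e4, hπCpsq]
    module
  rw [hClmul, hφlin, hmk1C]
  apply hmkeq
  have hco : (((s * s' + t * t' * B) • (⟨1, h1⟩ : LinearMap.ker dF)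
        + (s * t' + t * s') • (⟨π Cp, hC⟩ : LinearMap.ker dF) : LinearMap.ker dF) : F)
      - ((⟨a * b, hab⟩ : LinearMap.ker dF) : F)
      = ((s * s' + t * t' * B) • (1 : F) + (s * t' + t * s') • π Cp) - a * b := rfl
  rw [hco]
  have hdiff : ((s * s' + t * t' * B) • (1 : F) + (s * t' + t * s') • π Cp) - a * b
      = (-(t * t')) • dF (π v) + (A * dF (π u0') + (dF (π u0) * A'
        - dF (π u0) * dF (π u0'))) := by
    rw [hexp, hAA]
    module
  rw [hdiff]
  refine add_mem (Submodule.smul_mem _ _ ⟨π v, rfl⟩) (add_mem ?_ (sub_mem ?_ ?_))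
  · exact (rangeF A (π u0') hdFA).2
  · exact (rangeF A' (π u0) hdFA').1
  · exact r3 u0 u0'
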